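/- Define h : (1, 2) → ℝ by h(ξ) = ln((ξ+1)/(3(ξ−1))) + 2ξ/(ξ²−1) − ξ·ln²((ξ+1)/(3(ξ−1))). Then h'(ξ) = −( ln((ξ+1)/(3(ξ−1))) − 2ξ/(ξ²−1) )² ≤ 0 for all ξ ∈ (1, 2), h extends continuously to ξ = 2 with h(2) = 4/3, and consequently h(ξ) > 0 for all ξ ∈ (1, 2). -/

import Mathlib

open Set Real Filter

noncomputable def Hfun : ℝ → ℝ := fun x =>
  Real.log ((x + 1) / (3 * (x - 1))) + 2 * x / (x ^ 2 - 1)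
    - x * (Real.log ((x + 1) / (3 * (x - 1)))) ^ 2

lemma hasDerivAt_Hfun (ξ : ℝ) (h1 : 1 < ξ) (h2 : ξ < 2) :
    HasDerivAt Hfun
      (-(Real.log ((ξ + 1) / (3 * (ξ - 1))) - 2 * ξ / (ξ ^ 2 - 1)) ^ 2) ξ := by
  have hm : ξ - 1 ≠ 0 := by nlinarith
  have hp : ξ + 1 ≠ 0 := by nlinarith
  have hsq : ξ ^ 2 - 1 ≠ 0 := by nlinarith
  have hd : (3 : ℝ) * (ξ - 1) ≠ 0 := by positivity
  have hfne : (ξ + 1) / (3 * (ξ - 1)) ≠ 0 := div_ne_zero hp hd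
  have hf : HasDerivAt (fun x : ℝ => (x + 1) / (3 * (x - 1)))
      ((1 * (3 * (ξ - 1)) - (ξ + 1) * (3 * 1)) / (3 * (ξ - 1)) ^ 2) ξ := by
    exact HasDerivAt.div ((hasDerivAt_id ξ).add_const 1)
      (((hasDerivAt_id ξ).sub_const 1).const_mul 3) hd
  have hL : HasDerivAt (fun x : ℝ => Real.log ((x + 1) / (3 * (x - 1))))
      ((1 * (3 * (ξ - 1)) - (ξ + 1) * (3 * 1)) / (3 * (ξ - 1)) ^ 2 / ((ξ + 1) / (3 * (ξ - 1)))) ξ :=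
    hf.log hfne
  have hg : HasDerivAt (fun x : ℝ => 2 * x / (x ^ 2 - 1))
      ((2 * 1 * (ξ ^ 2 - 1) - 2 * ξ * (↑2 * ξ ^ 1 * 1)) / (ξ ^ 2 - 1) ^ 2) ξ := by
    exact HasDerivAt.div ((hasDerivAt_id ξ).const_mul 2)
      (((hasDerivAt_id ξ).pow 2).sub_const 1) hsq
  have hQ : HasDerivAt (fun x : ℝ => x * (Real.log ((x + 1) / (3 * (x - 1)))) ^ 2)
      (1 * (Real.log ((ξ + 1) / (3 * (ξ - 1)))) ^ 2 +
        ξ * (↑2 * (Real.log ((ξ + 1) / (3 * (ξ - 1)))) ^ 1 *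
          ((1 * (3 * (ξ - 1)) - (ξ + 1) * (3 * 1)) / (3 * (ξ - 1)) ^ 2 / ((ξ + 1) / (3 * (ξ - 1)))))) ξ :=
    (hasDerivAt_id ξ).mul (hL.pow 2)
  have := (hL.add hg).sub hQ
  refine (this : HasDerivAt Hfun _ ξ).congr_deriv ?_
  generalize Real.log ((ξ + 1) / (3 * (ξ - 1))) = L
  field_simp
  ring

theorem stmt_18 (h : ℝ → ℝ)
    (hh : ∀ ξ ∈ Set.Ioo (1 : ℝ) 2,
      h ξ = Real.log ((ξ + 1) / (3 * (ξ - 1))) + 2 * ξ / (ξ ^ 2 - 1)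
        - ξ * (Real.log ((ξ + 1) / (3 * (ξ - 1)))) ^ 2) :
    (∀ ξ ∈ Set.Ioo (1 : ℝ) 2,
      HasDerivAt h (-(Real.log ((ξ + 1) / (3 * (ξ - 1))) - 2 * ξ / (ξ ^ 2 - 1)) ^ 2) ξ) ∧
    Tendsto h (nhdsWithin 2 (Set.Iio 2)) (nhds (4 / 3)) ∧
    ∀ ξ ∈ Set.Ioo (1 : ℝ) 2, 0 < h ξ := by
  have heq : ∀ ξ ∈ Set.Ioo (1 : ℝ) 2, h ξ = Hfun ξ := hh
  -- derivatives
  have hDer : ∀ ξ ∈ Set.Ioo (1 : ℝ) 2,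
      HasDerivAt h (-(Real.log ((ξ + 1) / (3 * (ξ - 1))) - 2 * ξ / (ξ ^ 2 - 1)) ^ 2) ξ := by
    intro ξ hξ
    have hev : h =ᶠ[nhds ξ] Hfun := by
      filter_upwards [Ioo_mem_nhds hξ.1 hξ.2] with x hx using heq x hx
    exact (hasDerivAt_Hfun ξ hξ.1 hξ.2).congr_of_eventuallyEq hev
  -- continuity of Hfun at 2
  have hcont : ContinuousAt Hfun 2 := by
    have h1 : ContinuousAt (fun x : ℝ => (x + 1) / (3 * (x - 1))) 2 := by
      apply ContinuousAt.div (by fun_prop) (by fun_prop)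
      norm_num
    have hlog : ContinuousAt (fun x : ℝ => Real.log ((x + 1) / (3 * (x - 1)))) 2 := by
      apply ContinuousAt.log h1
      norm_num
    have hg : ContinuousAt (fun x : ℝ => 2 * x / (x ^ 2 - 1)) 2 := by
      apply ContinuousAt.div (by fun_prop) (by fun_prop)
      norm_num
    exact (hlog.add hg).sub ((continuousAt_id).mul (hlog.pow 2))
  have hH2 : Hfun 2 = 4 / 3 := by
    simp [Hfun]
    norm_num
  have hTendH : Tendsto Hfun (nhdsWithin 2 (Set.Iio 2)) (nhds (4 / 3)) := by
    rw [← hH2]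
    exact hcont.continuousWithinAt.tendsto
  have hevW : h =ᶠ[nhdsWithin 2 (Set.Iio 2)] Hfun := by
    filter_upwards [eventually_nhdsWithin_of_eventually_nhds
      (eventually_gt_nhds (by norm_num : (1:ℝ) < 2)),
      self_mem_nhdsWithin] with x hx1 hx2
    exact heq x ⟨hx1, hx2⟩
  have hTend : Tendsto h (nhdsWithin 2 (Set.Iio 2)) (nhds (4 / 3)) :=
    hTendH.congr' hevW.symm
  refine ⟨hDer, hTend, ?_⟩
  -- positivity
  have hanti : AntitoneOn h (Set.Ioo (1 : ℝ) 2) := by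
    apply antitoneOn_of_deriv_nonpos (convex_Ioo 1 2)
    · intro x hx
      exact (hDer x hx).continuousAt.continuousWithinAt
    · intro x hx
      rw [interior_Ioo] at hx
      exact (hDer x hx).differentiableAt.differentiableWithinAt
    · intro x hx
      rw [interior_Ioo] at hx
      rw [(hDer x hx).deriv]
      have := sq_nonneg (Real.log ((x + 1) / (3 * (x - 1))) - 2 * x / (x ^ 2 - 1))
      linarith
  intro ξ hξ
  have hge : (4 : ℝ) / 3 ≤ h ξ := by
    apply le_of_tendsto hTend
    filter_upwards [eventually_nhdsWithin_of_eventually_nhds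
      (eventually_gt_nhds hξ.2), self_mem_nhdsWithin] with x hx1 hx2
    exact hanti hξ ⟨lt_trans hξ.1 hx1, hx2⟩ (le_of_lt hx1)
  linarith
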